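/- arXiv:1702.04921 — 5 statements merged into one kernel-verified Lean document; each statement's English description precedes it below -/
import Mathlib

section
/- For a nonincreasingly sorted nonnegative vector x ∈ ℝ^n and any k ∈ {1,…,n−1} with ∑_{i=1}^{k} x_i > 0 and ∑_{i=1}^{k+1} x_i > 0, it holds that (∑_{i=1}^{k+1} x_i²)/(∑_{i=1}^{k+1} x_i) ≤ (∑_{i=1}^{k} x_i²)/(∑_{i=1}^{k} x_i); i.e., the ratio of the partial sum of squares to the partial sum is nonincreasing in k. -/
/-- For a nonincreasingly sorted nonnegative vector x ∈ ℝ^n and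
any k ∈ {1,…,n−1} with positive k-th and (k+1)-th prefix sums, the ratio of the
partial sum of squares to the partial sum is nonincreasing in k. -/
theorem ratio_prefix_sq_div_prefix_antitone
    (n : ℕ) (x : Fin n → ℝ)
    (hsort : ∀ i j : Fin n, i ≤ j → x j ≤ x i)
    (hnonneg : ∀ i, 0 ≤ x i)
    (k : ℕ) (hk1 : 1 ≤ k) (hkn : k < n)
    (hpos : 0 < ∑ i ∈ Finset.univ.filter (fun i : Fin n => (i : ℕ) < k), x i)
    (hpos' : 0 < ∑ i ∈ Finset.univ.filter (fun i : Fin n => (i : ℕ) < k + 1), x i) :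
    (∑ i ∈ Finset.univ.filter (fun i : Fin n => (i : ℕ) < k + 1), (x i) ^ 2)
        / (∑ i ∈ Finset.univ.filter (fun i : Fin n => (i : ℕ) < k + 1), x i)
      ≤ (∑ i ∈ Finset.univ.filter (fun i : Fin n => (i : ℕ) < k), (x i) ^ 2)
        / (∑ i ∈ Finset.univ.filter (fun i : Fin n => (i : ℕ) < k), x i) := by
  set K : Fin n := ⟨k, hkn⟩ with hK
  have hset : Finset.univ.filter (fun i : Fin n => (i : ℕ) < k + 1)
      = insert K (Finset.univ.filter (fun i : Fin n => (i : ℕ) < k)) := by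
    ext i
    simp only [Finset.mem_filter, Finset.mem_insert, Finset.mem_univ, true_and]
    constructor
    · intro h
      rcases Nat.lt_succ_iff_lt_or_eq.mp h with h | h
      · exact Or.inr h
      · left; exact Fin.ext h
    · rintro (rfl | h)
      · exact Nat.lt_succ_self k
      · exact Nat.lt_succ_of_lt h
  have hKnot : K ∉ Finset.univ.filter (fun i : Fin n => (i : ℕ) < k) := by
    simp [hK]
  set A := ∑ i ∈ Finset.univ.filter (fun i : Fin n => (i : ℕ) < k), (x i) ^ 2 with hA
  set B := ∑ i ∈ Finset.univ.filter (fun i : Fin n => (i : ℕ) < k), x i with hB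
  have hsum1 : (∑ i ∈ Finset.univ.filter (fun i : Fin n => (i : ℕ) < k + 1), (x i) ^ 2)
      = A + x K ^ 2 := by rw [hset, Finset.sum_insert hKnot]; ring
  have hsum2 : (∑ i ∈ Finset.univ.filter (fun i : Fin n => (i : ℕ) < k + 1), x i)
      = B + x K := by rw [hset, Finset.sum_insert hKnot]; ring
  rw [hsum1, hsum2]
  have ht : 0 ≤ x K := hnonneg K
  have hBt : B * x K ≤ A := by
    rw [hA, hB, Finset.sum_mul]
    apply Finset.sum_le_sum
    intro i hi
    have hik : (i : ℕ) < k := (Finset.mem_filter.mp hi).2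
    have : x K ≤ x i := hsort i K (by rw [Fin.le_def]; simp only [hK]; omega)
    nlinarith [hnonneg i]
  rw [div_le_div_iff₀ (by rw [hsum2] at hpos'; linarith) hpos]
  nlinarith [hnonneg K, hpos]
end

section
/- Let x ∈ ℝ^n be a probability vector (nonnegative entries summing to 1) sorted in nonincreasing order. Then for every k ∈ {1,…,n} with ∑_{i=1}^{k} x_i > 0, we have ∑_{i=1}^{n} x_i² ≤ (∑_{i=1}^{k} x_i²)/(∑_{i=1}^{k} x_i). -/
/-- For a probability vector x ∈ ℝ^n sorted nonincreasingly and any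
k ∈ {1,…,n} with positive k-th prefix sum,
∑_{i=1}^{n} x_i² ≤ (∑_{i=1}^{k} x_i²)/(∑_{i=1}^{k} x_i). -/
theorem sq_norm_le_prefix_ratio
    (n : ℕ) (x : Fin n → ℝ)
    (hnonneg : ∀ i, 0 ≤ x i)
    (hsum : ∑ i, x i = 1)
    (hsort : ∀ i j : Fin n, i ≤ j → x j ≤ x i)
    (k : ℕ) (hk1 : 1 ≤ k) (hkn : k ≤ n)
    (hpos : 0 < ∑ i ∈ Finset.univ.filter (fun i : Fin n => (i : ℕ) < k), x i) :
    (∑ i, (x i) ^ 2)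
      ≤ (∑ i ∈ Finset.univ.filter (fun i : Fin n => (i : ℕ) < k), (x i) ^ 2)
        / (∑ i ∈ Finset.univ.filter (fun i : Fin n => (i : ℕ) < k), x i) := by
  set P := Finset.univ.filter (fun i : Fin n => (i : ℕ) < k) with hP
  set T := Finset.univ.filter (fun i : Fin n => ¬ (i : ℕ) < k) with hT
  have hm : k - 1 < n := lt_of_lt_of_le (Nat.sub_lt hk1 one_pos) hkn
  set m := x ⟨k - 1, hm⟩ with hmdef
  have hm0 : 0 ≤ m := hnonneg _
  -- splits
  have hsplit1 : (∑ i ∈ P, x i) + (∑ i ∈ T, x i) = 1 := by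
    rw [← hsum, hP, hT, Finset.sum_filter_add_sum_filter_not]
  have hsplit2 : (∑ i ∈ P, (x i)^2) + (∑ i ∈ T, (x i)^2) = ∑ i, (x i)^2 := by
    rw [hP, hT, Finset.sum_filter_add_sum_filter_not]
  -- tail squares ≤ m * tail sum
  have hB2 : (∑ i ∈ T, (x i)^2) ≤ m * (∑ i ∈ T, x i) := by
    rw [Finset.mul_sum]
    apply Finset.sum_le_sum
    intro i hi
    have hik : ¬ (i : ℕ) < k := by
      simpa [hT] using hi
    have hle : x i ≤ m := by
      apply hsort ⟨k - 1, hm⟩ i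
      exact Fin.mk_le_of_le_val (le_trans (Nat.sub_le k 1) (not_lt.mp hik))
    nlinarith [hnonneg i]
  -- prefix squares ≥ m * prefix sum
  have hA2 : m * (∑ i ∈ P, x i) ≤ ∑ i ∈ P, (x i)^2 := by
    rw [Finset.mul_sum]
    apply Finset.sum_le_sum
    intro i hi
    have hik : (i : ℕ) < k := by simpa [hP] using hi
    have hle : m ≤ x i := by
      apply hsort i ⟨k - 1, hm⟩
      exact Fin.mk_le_of_le_val (Nat.le_sub_one_of_lt hik)
    nlinarith [hnonneg i]
  have hB1 : 0 ≤ ∑ i ∈ T, x i :=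
    Finset.sum_nonneg fun i _ => hnonneg i
  rw [le_div_iff₀ hpos]
  have h1 : (∑ i ∈ T, (x i)^2) * (∑ i ∈ P, x i)
      ≤ (∑ i ∈ P, (x i)^2) * (∑ i ∈ T, x i) := by
    calc (∑ i ∈ T, (x i)^2) * (∑ i ∈ P, x i)
        ≤ (m * (∑ i ∈ T, x i)) * (∑ i ∈ P, x i) :=
          mul_le_mul_of_nonneg_right hB2 hpos.le
      _ = (m * (∑ i ∈ P, x i)) * (∑ i ∈ T, x i) := by ring
      _ ≤ (∑ i ∈ P, (x i)^2) * (∑ i ∈ T, x i) :=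
          mul_le_mul_of_nonneg_right hA2 hB1
  calc (∑ i, (x i)^2) * (∑ i ∈ P, x i)
      = (∑ i ∈ P, (x i)^2) * (∑ i ∈ P, x i)
        + (∑ i ∈ T, (x i)^2) * (∑ i ∈ P, x i) := by rw [← hsplit2]; ring
    _ ≤ (∑ i ∈ P, (x i)^2) * (∑ i ∈ P, x i)
        + (∑ i ∈ P, (x i)^2) * (∑ i ∈ T, x i) := by linarith
    _ = (∑ i ∈ P, (x i)^2) * ((∑ i ∈ P, x i) + (∑ i ∈ T, x i)) := by ring
    _ = ∑ i ∈ P, (x i)^2 := by rw [hsplit1, mul_one]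
end

section
/- Let x ∈ ℝ^n be a probability vector sorted in nonincreasing order, and define p ∈ ℝ^n by p_i = x_i² + (1 − ‖x‖₂²)·x_i, where ‖x‖₂² = ∑_j x_j². Then for every k ∈ {1,…,n}, ∑_{i=1}^{k} p_i ≥ ∑_{i=1}^{k} x_i. -/
/-- For a probability vector x ∈ ℝ^n sorted nonincreasingly and
p_i = x_i² + (1 − ‖x‖₂²)·x_i, every prefix sum of p dominates that of x. -/
theorem threeMajority_prefix_ge
    (n : ℕ) (x : Fin n → ℝ)
    (hnonneg : ∀ i, 0 ≤ x i)
    (hsum : ∑ i, x i = 1)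
    (hsort : ∀ i j : Fin n, i ≤ j → x j ≤ x i)
    (p : Fin n → ℝ)
    (hp : ∀ i, p i = (x i) ^ 2 + (1 - ∑ j, (x j) ^ 2) * x i)
    (k : ℕ) (hk1 : 1 ≤ k) (hkn : k ≤ n) :
    (∑ i ∈ Finset.univ.filter (fun i : Fin n => (i : ℕ) < k), x i)
      ≤ ∑ i ∈ Finset.univ.filter (fun i : Fin n => (i : ℕ) < k), p i := by
  classical
  set A := Finset.univ.filter (fun i : Fin n => (i : ℕ) < k) with hA
  set B := Finset.univ.filter (fun i : Fin n => ¬ (i : ℕ) < k) with hB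
  have hsplit : ∀ f : Fin n → ℝ, ∑ i, f i = ∑ i ∈ A, f i + ∑ i ∈ B, f i := by
    intro f; rw [hA, hB, Finset.sum_filter_add_sum_filter_not]
  have key : (∑ i ∈ A, x i) * (∑ j ∈ B, (x j) ^ 2)
      ≤ (∑ i ∈ A, (x i) ^ 2) * (∑ j ∈ B, x j) := by
    rw [Finset.sum_mul_sum, Finset.sum_mul_sum]
    apply Finset.sum_le_sum
    intro i hi
    apply Finset.sum_le_sum
    intro j hj
    have hik : (i : ℕ) < k := (Finset.mem_filter.1 hi).2
    have hjk : ¬ (j : ℕ) < k := (Finset.mem_filter.1 hj).2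
    have hij : i ≤ j := by
      have : (i : ℕ) ≤ (j : ℕ) := le_trans (le_of_lt hik) (le_of_not_gt hjk)
      exact Fin.le_def.2 this
    have hxji : x j ≤ x i := hsort i j hij
    have h1 := hnonneg i
    have h2 := hnonneg j
    nlinarith [mul_nonneg h1 h2]
  have hpsum : ∑ i ∈ A, p i
      = ∑ i ∈ A, (x i) ^ 2 + (1 - ∑ j, (x j) ^ 2) * ∑ i ∈ A, x i := by
    simp only [hp, Finset.sum_add_distrib, Finset.mul_sum]
  rw [hpsum]
  have hT := hsplit x
  have hS := hsplit (fun i => (x i) ^ 2)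
  have hTnn : 0 ≤ ∑ i ∈ A, x i := Finset.sum_nonneg (fun i _ => hnonneg i)
  have hSAnn : 0 ≤ ∑ i ∈ A, (x i) ^ 2 :=
    Finset.sum_nonneg (fun i _ => sq_nonneg _)
  nlinarith [key]
end

section
/- Let x, y ∈ ℝ^n be probability vectors, both sorted in nonincreasing order, such that x majorizes y (i.e., ∑_{i=1}^{k} x_i ≥ ∑_{i=1}^{k} y_i for all k, with equality at k = n). Define p_i = x_i² + (1 − ‖x‖₂²)·x_i. Then p (after sorting nonincreasingly, which equals p itself since the map preserves the ordering) majorizes y: ∑_{i=1}^{k} p_i ≥ ∑_{i=1}^{k} y_i for all k ∈ {1,…,n}, and ∑_{i=1}^{n} p_i = 1. -/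
/-- protocol dominance of 3-Majority over Voter. If sorted probability
vectors x, y satisfy x ⪰ y (prefix-wise, with equality of total sums), and
p_i = x_i² + (1 − ‖x‖₂²)·x_i, then every prefix sum of p dominates that of y,
and ∑ p_i = 1. -/
theorem threeMajority_dominates_voter
    (n : ℕ) (x y : Fin n → ℝ)
    (hxnonneg : ∀ i, 0 ≤ x i) (hxsum : ∑ i, x i = 1)
    (hynonneg : ∀ i, 0 ≤ y i) (hysum : ∑ i, y i = 1)
    (hxsort : ∀ i j : Fin n, i ≤ j → x j ≤ x i)
    (hysort : ∀ i j : Fin n, i ≤ j → y j ≤ y i)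
    (hmaj : ∀ k : ℕ, k ≤ n →
      (∑ i ∈ Finset.univ.filter (fun i : Fin n => (i : ℕ) < k), y i)
        ≤ ∑ i ∈ Finset.univ.filter (fun i : Fin n => (i : ℕ) < k), x i)
    (p : Fin n → ℝ)
    (hp : ∀ i, p i = (x i) ^ 2 + (1 - ∑ j, (x j) ^ 2) * x i) :
    (∀ k : ℕ, 1 ≤ k → k ≤ n →
      (∑ i ∈ Finset.univ.filter (fun i : Fin n => (i : ℕ) < k), y i)
        ≤ ∑ i ∈ Finset.univ.filter (fun i : Fin n => (i : ℕ) < k), p i)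
    ∧ ∑ i, p i = 1 := by
  have hSsum : ∑ i, p i = 1 := by
    have : ∑ i, p i = ∑ i, ((x i) ^ 2 + (1 - ∑ j, (x j) ^ 2) * x i) := by
      exact Finset.sum_congr rfl (fun i _ => hp i)
    rw [this, Finset.sum_add_distrib, ← Finset.mul_sum, hxsum, mul_one]
    ring
  refine ⟨?_, hSsum⟩
  intro k hk1 hkn
  set A := Finset.univ.filter (fun i : Fin n => (i : ℕ) < k) with hA
  set B := Finset.univ.filter (fun i : Fin n => ¬ (i : ℕ) < k) with hB
  have hSA : (∑ i ∈ A, x i) + (∑ i ∈ B, x i) = 1 := by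
    rw [hA, hB, Finset.sum_filter_add_sum_filter_not]; exact hxsum
  have hQA : (∑ i ∈ A, (x i)^2) + (∑ i ∈ B, (x i)^2) = ∑ j, (x j)^2 := by
    rw [hA, hB, Finset.sum_filter_add_sum_filter_not]
  -- the key cross term is nonnegative
  have hD : 0 ≤ ∑ i ∈ A, ∑ j ∈ B, x i * x j * (x i - x j) := by
    refine Finset.sum_nonneg (fun i hi => Finset.sum_nonneg (fun j hj => ?_))
    have hi' : (i : ℕ) < k := (Finset.mem_filter.mp hi).2
    have hj' : ¬ (j : ℕ) < k := (Finset.mem_filter.mp hj).2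
    have hij : i ≤ j := by
      have : (i : ℕ) ≤ (j : ℕ) := le_trans (le_of_lt hi') (not_lt.mp hj')
      exact Fin.le_def.mpr this
    exact mul_nonneg (mul_nonneg (hxnonneg i) (hxnonneg j))
      (sub_nonneg.mpr (hxsort i j hij))
  have hDeq : ∑ i ∈ A, ∑ j ∈ B, x i * x j * (x i - x j)
      = (∑ i ∈ A, (x i)^2) * (∑ j ∈ B, x j)
        - (∑ i ∈ A, x i) * (∑ j ∈ B, (x j)^2) := by
    rw [Finset.sum_mul_sum, Finset.sum_mul_sum, ← Finset.sum_sub_distrib]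
    refine Finset.sum_congr rfl (fun i _ => ?_)
    rw [← Finset.sum_sub_distrib]
    refine Finset.sum_congr rfl (fun j _ => ?_)
    ring
  -- prefix sums of p dominate those of x
  have hpA : ∑ i ∈ A, p i
      = (∑ i ∈ A, (x i)^2) + (1 - ∑ j, (x j)^2) * ∑ i ∈ A, x i := by
    rw [Finset.mul_sum, ← Finset.sum_add_distrib]
    exact Finset.sum_congr rfl (fun i _ => hp i)
  have hxp : ∑ i ∈ A, x i ≤ ∑ i ∈ A, p i := by
    rw [hpA, ← hQA]
    have h1 : 0 ≤ (∑ i ∈ A, (x i)^2) * (∑ j ∈ B, x j)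
        - (∑ i ∈ A, x i) * (∑ j ∈ B, (x j)^2) := hDeq ▸ hD
    have hSB : ∑ j ∈ B, x j = 1 - ∑ i ∈ A, x i := by linarith
    rw [hSB] at h1
    nlinarith [h1]
  exact le_trans (hmaj k hkn) hxp
end

section
/- Let γ ≥ 18, n ≥ 2, and let ℓ' ≥ γ·log n and ℓ ≤ ℓ'/2 be positive reals. Set p = (ℓ'/n)², t₀ = n/(γℓ'), and let B be a binomial random variable with t₀·n trials and success probability p. Then max{2·E[B], (γ/2)·log n} ≤ ℓ' − ℓ, and consequently P(B ≥ ℓ' − ℓ) ≤ exp(−(γ/6)·log n) ≤ n^{−3}. -/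
open scoped ENNReal

/-- the Chernoff concentration step in the lower bound for 2-Choices.
With γ ≥ 18, n ≥ 2, ℓ' ≥ γ·log n, 0 < ℓ ≤ ℓ'/2, p = (ℓ'/n)², t₀ = n/(γℓ'), and
B ~ Bin(⌊t₀·n⌋, p), we have max{2·E[B], (γ/2)·log n} ≤ ℓ' − ℓ and consequently
P(B ≥ ℓ' − ℓ) ≤ exp(−(γ/6)·log n) ≤ n^{−3}. -/
theorem twoChoices_chernoff_step
    (γ n ℓ ℓ' : ℝ) (hγ : 18 ≤ γ) (hn : 2 ≤ n)
    (hℓ' : γ * Real.log n ≤ ℓ') (hℓpos : 0 < ℓ) (hℓ : ℓ ≤ ℓ' / 2)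
    (hℓn : ℓ' ≤ n)
    (hp : ENNReal.ofReal ((ℓ' / n) ^ 2) ≤ 1)
    (N : ℕ) (hN : N = ⌊n / (γ * ℓ') * n⌋₊) :
    max (2 * (N * (ℓ' / n) ^ 2)) (γ / 2 * Real.log n) ≤ ℓ' - ℓ ∧
    (PMF.binomial (ENNReal.ofReal ((ℓ' / n) ^ 2)).toNNReal
        (ENNReal.toNNReal_mono ENNReal.one_ne_top hp) N).toOuterMeasure
        {i : Fin (N + 1) | ℓ' - ℓ ≤ (i : ℝ)}
      ≤ ENNReal.ofReal (Real.exp (-(γ / 6 * Real.log n))) ∧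
    Real.exp (-(γ / 6 * Real.log n)) ≤ n ^ (-3 : ℝ) := by
  have hn0 : (0 : ℝ) < n := by linarith
  have hγ0 : (0 : ℝ) < γ := by linarith
  have hL2 : (0.6931471803 : ℝ) < Real.log 2 := Real.log_two_gt_d9
  have hLle : Real.log 2 ≤ Real.log n := Real.log_le_log (by norm_num) hn
  set L : ℝ := Real.log n with hLdef
  have hL0 : (0.6 : ℝ) < L := by linarith
  have hℓ'0 : (0 : ℝ) < ℓ' := by nlinarith
  set q : ℝ := (ℓ' / n) ^ 2 with hqdef
  have hq0 : 0 ≤ q := sq_nonneg _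
  have hq1 : q ≤ 1 := ENNReal.ofReal_le_one.mp hp
  -- bound on the mean
  have hNle : (N : ℝ) ≤ n ^ 2 / (γ * ℓ') := by
    rw [hN]
    calc (⌊n / (γ * ℓ') * n⌋₊ : ℝ) ≤ n / (γ * ℓ') * n :=
          Nat.floor_le (by positivity)
      _ = n ^ 2 / (γ * ℓ') := by ring
  have hμle : (N : ℝ) * q ≤ ℓ' / γ := by
    have hq : q = ℓ' ^ 2 / n ^ 2 := by rw [hqdef, div_pow]
    rw [hq]
    calc (N : ℝ) * (ℓ' ^ 2 / n ^ 2) ≤ n ^ 2 / (γ * ℓ') * (ℓ' ^ 2 / n ^ 2) := by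
          apply mul_le_mul_of_nonneg_right hNle (by positivity)
      _ = ℓ' / γ := by field_simp
  have hμ0 : 0 ≤ (N : ℝ) * q := by positivity
  set k : ℝ := ℓ' - ℓ with hkdef
  have hkℓ : ℓ' / 2 ≤ k := by rw [hkdef]; linarith
  have hk0 : 0 < k := by linarith
  -- first conjunct
  have hmax : max (2 * (N * (ℓ' / n) ^ 2)) (γ / 2 * L) ≤ ℓ' - ℓ := by
    apply max_le
    · have : 2 * ((N : ℝ) * q) ≤ 2 * (ℓ' / γ) :=
        mul_le_mul_of_nonneg_left hμle (by norm_num)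
      have h2 : 2 * (ℓ' / γ) ≤ ℓ' / 2 := by
        have h18 : ℓ' / γ ≤ ℓ' / 18 :=
          div_le_div_of_nonneg_left hℓ'0.le (by norm_num) hγ
        linarith
      calc 2 * ((N : ℝ) * q) ≤ ℓ' / 2 := by linarith
        _ ≤ ℓ' - ℓ := by linarith
    · nlinarith
  refine ⟨hmax, ?_, ?_⟩
  · -- the tail bound
    set μ : ℝ := (N : ℝ) * q with hμdef
    set m : ℕ := ⌈k⌉₊ with hmdef
    have hkm : k ≤ (m : ℝ) := Nat.le_ceil k
    -- the per-point real bound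
    have hterm : ∀ x : ℕ, q ^ x * (N.choose x : ℝ) ≤ Real.exp (9 * μ) * (1 / 9) ^ x := by
      intro x
      have h1 : (N.choose x : ℝ) ≤ (N : ℝ) ^ x / (x.factorial : ℝ) := by
        have := Nat.choose_le_pow_div (α := ℝ) x N
        simpa using this
      have h2 : q ^ x * (N.choose x : ℝ) ≤ ((N : ℝ) * q) ^ x / (x.factorial : ℝ) := by
        rw [mul_pow]
        calc q ^ x * (N.choose x : ℝ) ≤ q ^ x * ((N : ℝ) ^ x / (x.factorial : ℝ)) :=
              mul_le_mul_of_nonneg_left h1 (by positivity)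
          _ = (N : ℝ) ^ x * q ^ x / (x.factorial : ℝ) := by ring
      have h3 : (9 * μ) ^ x / (x.factorial : ℝ) ≤ Real.exp (9 * μ) := by
        have := Real.pow_div_factorial_le_exp (x := 9 * μ) (by positivity) x
        simpa using this
      have h4 : μ ^ x / (x.factorial : ℝ) = (9 * μ) ^ x / (x.factorial : ℝ) * (1 / 9) ^ x := by
        rw [mul_pow]
        field_simp
        rw [hμdef, ← mul_pow, ← mul_pow]
        congr 1
        ring
      calc q ^ x * (N.choose x : ℝ) ≤ μ ^ x / (x.factorial : ℝ) := h2
        _ = (9 * μ) ^ x / (x.factorial : ℝ) * (1 / 9) ^ x := h4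
        _ ≤ Real.exp (9 * μ) * (1 / 9) ^ x :=
            mul_le_mul_of_nonneg_right h3 (by positivity)
    -- final scalar inequality
    have hfinal : Real.exp (9 * μ) * ((1 / 9 : ℝ) ^ m * (1 - 1 / 9)⁻¹)
        ≤ Real.exp (-(γ / 6 * L)) := by
      have hlog3 : (1 : ℝ) ≤ Real.log 3 := by
        rw [Real.le_log_iff_exp_le (by norm_num)]
        calc Real.exp 1 ≤ 2.7182818286 := Real.exp_one_lt_d9.le
          _ ≤ 3 := by norm_num
      have h19 : ((1 : ℝ) / 9) ^ m = Real.exp (-((m : ℝ) * Real.log 9)) := by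
        rw [show -((m : ℝ) * Real.log 9) = (m : ℝ) * (-Real.log 9) by ring,
          Real.exp_nat_mul, Real.exp_neg, Real.exp_log (by norm_num : (0:ℝ) < 9), one_div]
      have h98 : ((1 : ℝ) - 1 / 9)⁻¹ = 9 / 8 := by norm_num
      rw [h19, h98, ← mul_assoc, ← Real.exp_add]
      have hlog9 : (2 : ℝ) ≤ Real.log 9 := by
        have : (9 : ℝ) = 3 ^ 2 := by norm_num
        rw [this, Real.log_pow]
        push_cast
        linarith
      have hm2 : 2 * k ≤ (m : ℝ) * Real.log 9 := by
        have := mul_le_mul hkm hlog9 (by norm_num) ((Nat.cast_nonneg m : (0:ℝ) ≤ m))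
        linarith
      have key : 9 * μ + -((m : ℝ) * Real.log 9) + 1 ≤ -(γ / 6 * L) := by
        have h9μ : 9 * μ ≤ ℓ' / 2 := by
          have h18 : ℓ' / γ ≤ ℓ' / 18 :=
            div_le_div_of_nonneg_left hℓ'0.le (by norm_num) hγ
          linarith
        have hγL : γ * L ≤ ℓ' := hℓ'
        have hmk : (ℓ' : ℝ) ≤ (m : ℝ) * Real.log 9 := by linarith
        have hγL6 : γ / 6 * L ≤ ℓ' / 6 := by linarith
        have hL1 : (1 : ℝ) ≤ ℓ' / 3 := by
          have := mul_le_mul hγ hL0.le (by norm_num) (le_trans (by norm_num) hγ)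
          linarith
        linarith
      calc Real.exp (9 * μ + -((m : ℝ) * Real.log 9)) * (9 / 8)
          ≤ Real.exp (9 * μ + -((m : ℝ) * Real.log 9)) * Real.exp 1 := by
            apply mul_le_mul_of_nonneg_left _ (Real.exp_nonneg _)
            rw [show (9 : ℝ)/8 = 1 + 1/8 by norm_num]
            calc (1 : ℝ) + 1/8 ≤ 1 + 1 := by norm_num
              _ ≤ Real.exp 1 := by linarith [Real.add_one_le_exp (1 : ℝ)]
        _ = Real.exp (9 * μ + -((m : ℝ) * Real.log 9) + 1) := by rw [← Real.exp_add]
        _ ≤ Real.exp (-(γ / 6 * L)) := Real.exp_le_exp.mpr key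
    -- assemble the ENNReal computation
    rw [PMF.toOuterMeasure_apply, tsum_fintype]
    have hstep1 : ∀ x : Fin (N + 1),
        Set.indicator {i : Fin (N + 1) | ℓ' - ℓ ≤ (i : ℝ)}
          (PMF.binomial (ENNReal.ofReal q).toNNReal (ENNReal.toNNReal_mono ENNReal.one_ne_top hp) N) x
        ≤ ENNReal.ofReal (if k ≤ ((x : ℕ) : ℝ) then
            Real.exp (9 * μ) * (1 / 9) ^ (x : ℕ) else 0) := by
      intro x
      rw [Set.indicator_apply]
      by_cases hx : x ∈ {i : Fin (N + 1) | ℓ' - ℓ ≤ (i : ℝ)}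
      · rw [if_pos hx, if_pos (by exact hx)]
        erw [PMF.binomial_apply]
        have hpq : (ENNReal.ofReal q).toReal = q := ENNReal.toReal_ofReal hq0
        calc (((ENNReal.ofReal q).toNNReal ^ (x : ℕ) * (1 - (ENNReal.ofReal q).toNNReal) ^ ((Fin.last N : ℕ) - (x : ℕ))
              * (N.choose x : ℕ) : NNReal) : ℝ≥0∞)
            ≤ (((ENNReal.ofReal q).toNNReal ^ (x : ℕ) * 1 * (N.choose x : ℕ) : NNReal) : ℝ≥0∞) := by
              gcongr
              exact pow_le_one₀ (by positivity) tsub_le_self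
          _ = ENNReal.ofReal (q ^ (x : ℕ) * (N.choose x : ℝ)) := by
              rw [mul_one, ← ENNReal.ofReal_coe_nnreal]
              push_cast
              rw [hpq]
          _ ≤ ENNReal.ofReal (Real.exp (9 * μ) * (1 / 9) ^ (x : ℕ)) :=
              ENNReal.ofReal_le_ofReal (hterm x)
      · rw [if_neg hx, if_neg (by exact hx)]
        simp
    calc ∑ x : Fin (N + 1), Set.indicator {i : Fin (N + 1) | ℓ' - ℓ ≤ (i : ℝ)}
          (PMF.binomial (ENNReal.ofReal q).toNNReal (ENNReal.toNNReal_mono ENNReal.one_ne_top hp) N) x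
        ≤ ∑ x : Fin (N + 1), ENNReal.ofReal (if k ≤ ((x : ℕ) : ℝ) then
            Real.exp (9 * μ) * (1 / 9) ^ (x : ℕ) else 0) :=
          Finset.sum_le_sum fun x _ => hstep1 x
      _ = ENNReal.ofReal (∑ x : Fin (N + 1), if k ≤ ((x : ℕ) : ℝ) then
            Real.exp (9 * μ) * (1 / 9) ^ (x : ℕ) else 0) := by
          rw [← ENNReal.ofReal_sum_of_nonneg]
          intro x _
          split <;> positivity
      _ ≤ ENNReal.ofReal (Real.exp (-(γ / 6 * L))) := by
          apply ENNReal.ofReal_le_ofReal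
          have hsum : (∑ x : Fin (N + 1), if k ≤ ((x : ℕ) : ℝ) then
              Real.exp (9 * μ) * (1 / 9) ^ (x : ℕ) else 0)
              = ∑ j ∈ Finset.range (N + 1), if k ≤ (j : ℝ) then
                Real.exp (9 * μ) * (1 / 9) ^ j else 0 :=
            Fin.sum_univ_eq_sum_range (fun j => if k ≤ (j : ℝ) then
              Real.exp (9 * μ) * (1 / 9) ^ j else 0) (N + 1)
          rw [hsum]
          -- the conditional is m ≤ j
          have hcond : ∀ j : ℕ, (k ≤ (j : ℝ)) ↔ m ≤ j := fun j => (Nat.ceil_le).symm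
          have hrw : (∑ j ∈ Finset.range (N + 1), if k ≤ (j : ℝ) then
                Real.exp (9 * μ) * (1 / 9) ^ j else 0)
              = ∑ j ∈ (Finset.range (N + 1)).filter (fun j => m ≤ j),
                  Real.exp (9 * μ) * (1 / 9) ^ j := by
            rw [Finset.sum_filter]
            exact Finset.sum_congr rfl fun j _ => if_congr (hcond j) rfl rfl
          rw [hrw]
          have hsubset : (Finset.range (N + 1)).filter (fun j => m ≤ j)
              ⊆ Finset.Ico m (N + 1 + m) := by
            intro j hj
            simp only [Finset.mem_filter, Finset.mem_range] at hj
            simp only [Finset.mem_Ico]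
            exact ⟨hj.2, by omega⟩
          calc (∑ j ∈ (Finset.range (N + 1)).filter (fun j => m ≤ j),
                  Real.exp (9 * μ) * (1 / 9) ^ j)
              ≤ ∑ j ∈ Finset.Ico m (N + 1 + m), Real.exp (9 * μ) * (1 / 9) ^ j :=
                Finset.sum_le_sum_of_subset_of_nonneg hsubset
                  (fun j _ _ => by positivity)
            _ = Real.exp (9 * μ) * ((1 / 9) ^ m *
                  ∑ i ∈ Finset.range (N + 1 + m - m), (1 / 9 : ℝ) ^ i) := by
                rw [Finset.sum_Ico_eq_sum_range, Finset.mul_sum, Finset.mul_sum]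
                exact Finset.sum_congr rfl fun i _ => by rw [pow_add]
            _ ≤ Real.exp (9 * μ) * ((1 / 9) ^ m * (1 - 1 / 9)⁻¹) := by
                gcongr
                exact (Summable.sum_le_tsum _ (fun i _ => by positivity)
                  (summable_geometric_of_lt_one (by norm_num) (by norm_num))).trans
                  (le_of_eq (tsum_geometric_of_lt_one (by norm_num) (by norm_num)))
            _ ≤ Real.exp (-(γ / 6 * L)) := hfinal
  · -- exp(-(γ/6) log n) ≤ n ^ (-3)
    rw [Real.rpow_def_of_pos hn0]
    apply Real.exp_le_exp.mpr
    rw [← hLdef]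
    nlinarith
end
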